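/- For all integers m ≥ 1 and n ≥ 1, the following identity holds in ℂ: (−1)^{mn} · ∏_{h=1}^{m} U_{2n}(i·cos(hπ/(2m+1))) = ∏_{h=1}^{m} ∏_{k=1}^{n} (4·cos²(hπ/(2m+1)) + 4·cos²(kπ/(2n+1))), where i is the imaginary unit and the right-hand side is a real number regarded as a complex number. -/

import Mathlib

open Real Polynomial

lemma U_deg_coeff (N : ℕ) : ((Polynomial.Chebyshev.U ℂ N).degree = (N : ℕ)) ∧
    (Polynomial.Chebyshev.U ℂ N).coeff N = 2 ^ N := by
  induction N using Nat.twoStepInduction with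
  | zero => simp [Polynomial.Chebyshev.U_zero]
  | one =>
      rw [Nat.cast_one, Polynomial.Chebyshev.U_one]
      constructor
      · rw [show (2 * X : ℂ[X]) = Polynomial.C 2 * X from by rw [map_ofNat]]
        rw [degree_C_mul (by norm_num), degree_X]
        rfl
      · simp [coeff_X]
  | more N ih2 ih1 =>
      have key : Polynomial.Chebyshev.U ℂ ((N + 2 : ℕ) : ℤ) =
          2 * X * Polynomial.Chebyshev.U ℂ ((N + 1 : ℕ) : ℤ) -
          Polynomial.Chebyshev.U ℂ (N : ℕ) := by
        push_cast
        exact Polynomial.Chebyshev.U_add_two ℂ N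
      have h2X : (2 * X : ℂ[X]) = Polynomial.C 2 * X := by rw [map_ofNat]
      have hdeg1 : (2 * X * Polynomial.Chebyshev.U ℂ ((N + 1 : ℕ) : ℤ)).degree
          = ((N + 2 : ℕ) : WithBot ℕ) := by
        rw [degree_mul, h2X, degree_C_mul (by norm_num), degree_X, ih1.1]
        norm_cast; omega
      have hdeglt : (Polynomial.Chebyshev.U ℂ (N : ℕ)).degree <
          ((N + 2 : ℕ) : WithBot ℕ) := by
        rw [ih2.1]
        exact_mod_cast Nat.lt_add_of_pos_right (by norm_num)
      have hc0 : (Polynomial.Chebyshev.U ℂ (N : ℕ)).coeff (N + 2) = 0 :=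
        coeff_eq_zero_of_degree_lt (by rw [ih2.1]; exact_mod_cast Nat.lt_add_of_pos_right (by norm_num))
      constructor
      · rw [key, degree_sub_eq_left_of_degree_lt (by rw [hdeg1]; exact hdeglt), hdeg1]
      · rw [key, coeff_sub, hc0, sub_zero, h2X, mul_assoc, coeff_C_mul,
          coeff_X_mul (p := Polynomial.Chebyshev.U ℂ ((N + 1 : ℕ) : ℤ)) (n := N + 1)]
        rw [ih1.2]
        ring


lemma U_eq_prod (n : ℕ) (hn : 1 ≤ n) :
    Polynomial.Chebyshev.U ℂ ((2 * n : ℕ) : ℤ) =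
    Polynomial.C ((2 : ℂ) ^ (2 * n)) *
      ∏ k ∈ Finset.Icc 1 (2 * n),
        (X - Polynomial.C ((Real.cos (k * π / (2 * n + 1)) : ℝ) : ℂ)) := by
  set c : ℕ → ℂ := fun k => ((Real.cos (k * π / (2 * n + 1)) : ℝ) : ℂ) with hc
  set Q : ℂ[X] := Polynomial.C ((2 : ℂ) ^ (2 * n)) *
      ∏ k ∈ Finset.Icc 1 (2 * n), (X - Polynomial.C (c k)) with hQ
  have hprodmonic : (∏ k ∈ Finset.Icc 1 (2 * n), (X - Polynomial.C (c k))).Monic :=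
    monic_prod_of_monic _ _ fun k _ => monic_X_sub_C (c k)
  have hproddeg : (∏ k ∈ Finset.Icc 1 (2 * n), (X - Polynomial.C (c k))).natDegree = 2 * n := by
    rw [natDegree_prod _ _ fun k _ => X_sub_C_ne_zero (c k)]
    simp [natDegree_X_sub_C]
  have h2ne : ((2 : ℂ) ^ (2 * n)) ≠ 0 := by norm_num
  have hQdeg : Q.degree = ((2 * n : ℕ) : WithBot ℕ) := by
    rw [hQ, degree_C_mul h2ne, degree_eq_natDegree hprodmonic.ne_zero, hproddeg]
  have hQlead : Q.leadingCoeff = 2 ^ (2 * n) := by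
    rw [hQ, leadingCoeff_mul, leadingCoeff_C, hprodmonic.leadingCoeff, mul_one]
  have hU := U_deg_coeff (2 * n)
  have hUne : Polynomial.Chebyshev.U ℂ ((2 * n : ℕ) : ℤ) ≠ 0 := by
    intro h
    exact h2ne (by rw [← hU.2, h, coeff_zero])
  have hUlead : (Polynomial.Chebyshev.U ℂ ((2 * n : ℕ) : ℤ)).leadingCoeff = 2 ^ (2 * n) := by
    rw [leadingCoeff, natDegree_eq_of_degree_eq_some hU.1, hU.2]
  have hinj : Set.InjOn c (Finset.Icc 1 (2 * n)) := by
    intro k hk l hl h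
    simp only [Finset.coe_Icc, Set.mem_Icc] at hk hl
    have hcc : Real.cos ((k : ℝ) * π / (2 * (n : ℝ) + 1)) =
        Real.cos ((l : ℝ) * π / (2 * (n : ℝ) + 1)) := Complex.ofReal_inj.mp h
    have hmem : ∀ j : ℕ, j ≤ 2 * n → (j : ℝ) * π / (2 * (n : ℝ) + 1) ∈ Set.Icc 0 π := by
      intro j hj
      constructor
      · positivity
      · rw [div_le_iff₀ (by positivity)]
        have : (j : ℝ) ≤ 2 * n := by exact_mod_cast hj
        nlinarith [Real.pi_pos]
    have := Real.injOn_cos (hmem k hk.2) (hmem l hl.2) hcc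
    have hπ := Real.pi_pos
    field_simp at this
    exact_mod_cast (show (k : ℝ) = l by linarith)
  have hevalU : ∀ k ∈ Finset.Icc 1 (2 * n),
      (Polynomial.Chebyshev.U ℂ ((2 * n : ℕ) : ℤ)).eval (c k) = 0 := by
    intro k hk
    simp only [Finset.mem_Icc] at hk
    have θpos : 0 < (k : ℝ) * π / (2 * (n : ℝ) + 1) := by
      have h1 : (1 : ℝ) ≤ k := by exact_mod_cast hk.1
      have := Real.pi_pos
      positivity
    have θlt : (k : ℝ) * π / (2 * (n : ℝ) + 1) < π := by
      rw [div_lt_iff₀ (by positivity)]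
      have : (k : ℝ) ≤ 2 * n := by exact_mod_cast hk.2
      nlinarith [Real.pi_pos]
    set θ : ℝ := (k : ℝ) * π / (2 * (n : ℝ) + 1) with hθ
    have hsin : Complex.sin ((θ : ℝ) : ℂ) ≠ 0 := by
      rw [← Complex.ofReal_sin]
      exact_mod_cast (Real.sin_pos_of_pos_of_lt_pi θpos θlt).ne'
    have key := Polynomial.Chebyshev.U_complex_cos ((θ : ℝ) : ℂ) (2 * n)
    have harg : (((2 * (n : ℕ) : ℤ) : ℂ) + 1) * ((θ : ℝ) : ℂ) = (((k : ℝ) * π : ℝ) : ℂ) := by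
      have hden : (1 + (n : ℂ) * 2) ≠ 0 := by
        have : (1 + (n : ℝ) * 2) ≠ 0 := by positivity
        exact_mod_cast this
      rw [hθ]
      push_cast
      rw [mul_comm, div_mul_eq_mul_div, mul_comm]
      exact mul_div_cancel_left₀ _ (fun h => hden (by linear_combination h))
    rw [show ((2 * (n : ℕ) : ℤ) : ℂ) = ((2 * (n : ℤ) : ℤ) : ℂ) by push_cast; ring] at harg
    rw [harg] at key
    have hzero : Complex.sin (((k : ℝ) * π : ℝ) : ℂ) = 0 := by
      rw [← Complex.ofReal_sin]
      exact_mod_cast Real.sin_nat_mul_pi k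
    rw [hzero] at key
    have h0 := (mul_eq_zero.mp key).resolve_right hsin
    rw [← Complex.ofReal_cos] at h0
    convert h0 using 2 <;> push_cast <;> ring
  have hevalQ : ∀ k ∈ Finset.Icc 1 (2 * n), Q.eval (c k) = 0 := by
    intro k hk
    rw [hQ, eval_mul, eval_prod]
    rw [Finset.prod_eq_zero hk (by simp)]
    ring
  have hcard : (Finset.Icc 1 (2 * n)).card = 2 * n := by
    rw [Nat.card_Icc]; omega
  refine Polynomial.eq_of_degree_sub_lt_of_eval_index_eq (Finset.Icc 1 (2 * n)) hinj ?_ ?_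
  · rw [hcard]
    calc (Polynomial.Chebyshev.U ℂ ((2 * n : ℕ) : ℤ) - Q).degree
        < (Polynomial.Chebyshev.U ℂ ((2 * n : ℕ) : ℤ)).degree :=
          degree_sub_lt (by rw [hU.1, hQdeg]) hUne (by rw [hUlead, hQlead])
      _ = ((2 * n : ℕ) : WithBot ℕ) := hU.1
  · intro k hk
    rw [hevalU k hk, hevalQ k hk]


lemma U_eval_I (n : ℕ) (hn : 1 ≤ n) (x : ℝ) :
    (Polynomial.Chebyshev.U ℂ (2 * (n : ℤ))).eval (Complex.I * (x : ℂ)) =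
    (-1 : ℂ) ^ n * ∏ k ∈ Finset.Icc 1 n,
      ((4 * x ^ 2 + 4 * Real.cos (k * π / (2 * n + 1)) ^ 2 : ℝ) : ℂ) := by
  have hidx : (2 * (n : ℤ)) = ((2 * n : ℕ) : ℤ) := by push_cast; ring
  rw [hidx, U_eq_prod n hn, eval_mul, eval_C, eval_prod]
  simp only [eval_sub, eval_X, eval_C]
  have hsplit : ∀ f : ℕ → ℂ, ∏ k ∈ Finset.Icc 1 (2 * n), f k =
      (∏ k ∈ Finset.Icc 1 n, f k) * ∏ k ∈ Finset.Ioc n (2 * n), f k := by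
    intro f
    rw [show (1 : ℕ) = 0 + 1 from rfl, Finset.Icc_add_one_left_eq_Ioc, Finset.Icc_add_one_left_eq_Ioc]
    exact (Finset.prod_Ioc_consecutive f (Nat.zero_le n) (by omega)).symm
  have hre : ∀ f : ℕ → ℂ, ∏ j ∈ Finset.Ioc n (2 * n), f j
      = ∏ k ∈ Finset.Icc 1 n, f (2 * n + 1 - k) := by
    intro f
    refine Finset.prod_nbij' (fun j => 2 * n + 1 - j) (fun k => 2 * n + 1 - k)
      ?_ ?_ ?_ ?_ ?_
    · intro a ha; simp only [Finset.mem_Ioc, Finset.mem_Icc] at *; omega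
    · intro a ha; simp only [Finset.mem_Ioc, Finset.mem_Icc] at *; omega
    · intro a ha; simp only [Finset.mem_Ioc] at ha; omega
    · intro a ha; simp only [Finset.mem_Icc] at ha; omega
    · intro a ha; simp only [Finset.mem_Ioc] at ha; congr 1; omega
  have hπ := Real.pi_pos
  have hden : (2 * (n : ℝ) + 1) ≠ 0 := by positivity
  have hneg : ∀ k ∈ Finset.Icc 1 n,
      ((Real.cos (((2 * n + 1 - k : ℕ) : ℝ) * π / (2 * n + 1)) : ℝ) : ℂ)
      = -((Real.cos ((k : ℝ) * π / (2 * n + 1)) : ℝ) : ℂ) := by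
    intro k hk
    simp only [Finset.mem_Icc] at hk
    have hcast : ((2 * n + 1 - k : ℕ) : ℝ) = 2 * (n : ℝ) + 1 - (k : ℝ) := by
      have : k ≤ 2 * n + 1 := by omega
      push_cast [this]
      ring
    rw [hcast, show (2 * (n : ℝ) + 1 - (k : ℝ)) * π / (2 * (n : ℝ) + 1)
        = π - (k : ℝ) * π / (2 * (n : ℝ) + 1) by field_simp,
      Real.cos_pi_sub]
    push_cast
    ring
  rw [hsplit, hre]
  have h2 : (∏ k ∈ Finset.Icc 1 n, (Complex.I * (x : ℂ)
      - ((Real.cos (((2 * n + 1 - k : ℕ) : ℝ) * π / (2 * n + 1)) : ℝ) : ℂ)))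
      = ∏ k ∈ Finset.Icc 1 n, (Complex.I * (x : ℂ)
      + ((Real.cos ((k : ℝ) * π / (2 * n + 1)) : ℝ) : ℂ)) :=
    Finset.prod_congr rfl fun k hk => by rw [hneg k hk]; ring
  rw [h2]
  rw [← Finset.prod_mul_distrib]
  rw [show ((2 : ℂ) ^ (2 * n)) = ∏ k ∈ Finset.Icc 1 n, (4 : ℂ) by
    rw [Finset.prod_const, Nat.card_Icc, pow_mul]; norm_num]
  rw [← Finset.prod_mul_distrib]
  rw [show ((-1 : ℂ) ^ n) = ∏ k ∈ Finset.Icc 1 n, (-1 : ℂ) by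
    rw [Finset.prod_const, Nat.card_Icc]; norm_num]
  rw [← Finset.prod_mul_distrib]
  refine Finset.prod_congr rfl fun k hk => ?_
  push_cast
  linear_combination (4 * (x : ℂ) ^ 2) * Complex.I_sq


theorem chebyshevU_product_eq_double_product (m n : ℕ) (hm : 1 ≤ m) (hn : 1 ≤ n) :
    (-1 : ℂ) ^ (m * n) *
      ∏ h ∈ Finset.Icc 1 m,
        (Polynomial.Chebyshev.U ℂ (2 * n)).eval
          (Complex.I * (Real.cos (h * π / (2 * m + 1)) : ℂ)) =
      ((∏ h ∈ Finset.Icc 1 m, ∏ k ∈ Finset.Icc 1 n,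
        (4 * Real.cos (h * π / (2 * m + 1)) ^ 2 +
         4 * Real.cos (k * π / (2 * n + 1)) ^ 2) : ℝ) : ℂ) := by
  have hprod : ∏ h ∈ Finset.Icc 1 m,
      (Polynomial.Chebyshev.U ℂ (2 * n)).eval
        (Complex.I * (Real.cos (h * π / (2 * m + 1)) : ℂ))
      = ∏ h ∈ Finset.Icc 1 m, ((-1 : ℂ) ^ n * ∏ k ∈ Finset.Icc 1 n,
        ((4 * Real.cos (h * π / (2 * m + 1)) ^ 2
          + 4 * Real.cos (k * π / (2 * n + 1)) ^ 2 : ℝ) : ℂ)) :=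
    Finset.prod_congr rfl fun h _ => U_eval_I n hn (Real.cos (h * π / (2 * m + 1)))
  rw [hprod, Finset.prod_mul_distrib, Finset.prod_const, Nat.card_Icc,
    Nat.add_sub_cancel, ← pow_mul, ← mul_assoc, ← pow_add]
  rw [show (-1 : ℂ) ^ (m * n + n * m) = 1 from Even.neg_one_pow ⟨m * n, by ring⟩, one_mul]
  push_cast
  rfl
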